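/- arXiv:1410.0742 — 2 statements merged into one kernel-verified Lean document; each statement's English description precedes it below -/
import Mathlib

section
/- For all natural numbers n, m and every real number x: B_{s,q}[n+m; x] = Σ_{r=0}^{n} Σ_{j=0}^{m} Σ_{k=0}^{n+m} S_{s,q}[m,j] · q^{(j(1−s)+sm)(k−j)} · binom(r, k−j)_{q^{s−1}} · S_{s,q}[n,r] · x^k · Π_{i=0}^{r−k+j−1} [j(1−s) + sm + i·(s−1)]_q, where binom(r, k−j) is interpreted as 0 when j > k and the exponent k − j is computed in ℤ. -/
/-- The `q`-bracket `[t]_q = (q^t - 1)/(q - 1)` (real exponentiation). -/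
noncomputable def qBracket (q t : ℝ) : ℝ := (q ^ t - 1) / (q - 1)

open Classical in
/-- The `Q`-binomial coefficient: the sum of `Q^(t₁+⋯+t_{n-k})` over all weakly
increasing integer tuples `0 ≤ t₁ ≤ ⋯ ≤ t_{n-k} ≤ k` when `k ≤ n`, and `0` when `k > n`. -/
noncomputable def qBinom (Q : ℝ) (n k : ℕ) : ℝ :=
  if k ≤ n then
    ∑ f ∈ Finset.univ.filter (fun f : Fin (n - k) → Fin (k + 1) => Monotone f),
      Q ^ (∑ i, (f i : ℕ))
  else 0

/-- The generalized `q`-Stirling numbers `S_{s,q}[n,k]` of Goldman–Haglund type. -/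
noncomputable def genStirling (s q : ℝ) : ℕ → ℕ → ℝ
  | 0, 0 => 1
  | 0, _ + 1 => 0
  | _ + 1, 0 => 0
  | n + 1, k + 1 =>
    if k + 1 ≤ n + 1 then
      q ^ (s * (n : ℝ) - (s - 1) * (k : ℝ)) * genStirling s q n k
        + qBracket q (s * (n : ℝ) - (s - 1) * ((k : ℝ) + 1)) * genStirling s q n (k + 1)
    else 0

/-- The generalized Bell polynomial `B_{s,q}[n;x]`. -/
noncomputable def genBellPoly (s q : ℝ) (n : ℕ) (x : ℝ) : ℝ :=
  ∑ k ∈ Finset.range (n + 1), genStirling s q n k * x ^ k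



open Classical in
noncomputable def Wsum (Q : ℝ) (a b : ℕ) : ℝ :=
  ∑ f ∈ Finset.univ.filter (fun f : Fin a → Fin (b + 1) => Monotone f),
    Q ^ (∑ i, (f i : ℕ))

lemma qBinom_eq_Wsum (Q : ℝ) {n k : ℕ} (h : k ≤ n) : qBinom Q n k = Wsum Q (n - k) k := by
  rw [qBinom, if_pos h, Wsum]

lemma qBinom_of_gt (Q : ℝ) {n k : ℕ} (h : n < k) : qBinom Q n k = 0 := by
  rw [qBinom, if_neg (by omega)]

lemma Wsum_zero_left (Q : ℝ) (b : ℕ) : Wsum Q 0 b = 1 := by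
  rw [Wsum]
  rw [Finset.filter_true_of_mem (fun f _ => (by intro i; exact absurd i.2 (by omega) : Monotone f))]
  simp

lemma Wsum_zero_right (Q : ℝ) (a : ℕ) : Wsum Q a 0 = 1 := by
  rw [Wsum]
  rw [Finset.filter_true_of_mem (fun f _ => (by intro i j _; omega : Monotone f))]
  simp

lemma monotone_cons_zero {a b : ℕ} (g : Fin a → Fin (b + 2)) (hg : Monotone g) :
    Monotone (Fin.cons 0 g : Fin (a + 1) → Fin (b + 2)) := by
  intro i j hij
  cases i using Fin.cases with
  | zero => simp only [Fin.cons_zero]; exact Fin.zero_le _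
  | succ i =>
    cases j using Fin.cases with
    | zero => exact absurd hij (by simp [Fin.le_def])
    | succ j =>
      simp only [Fin.cons_succ]
      exact hg (Fin.succ_le_succ_iff.1 hij)

open Finset in
lemma Wsum_rec (Q : ℝ) (a b : ℕ) :
    Wsum Q (a + 1) (b + 1) = Wsum Q a (b + 1) + Q ^ (a + 1) * Wsum Q (a + 1) b := by
  classical
  rw [Wsum]
  rw [← Finset.sum_filter_add_sum_filter_not
      (Finset.univ.filter (fun f : Fin (a+1) → Fin (b+2) => Monotone f))
      (fun f => f 0 = 0)]
  congr 1
  · -- f 0 = 0 part equals Wsum a (b+1)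
    rw [Wsum]
    apply Finset.sum_nbij' (i := fun f => f ∘ Fin.succ) (j := fun g => Fin.cons 0 g)
    · intro f hf
      simp only [Finset.mem_filter, Finset.mem_univ, true_and] at hf ⊢
      exact hf.1.comp (Fin.strictMono_succ).monotone
    · intro g hg
      simp only [Finset.mem_filter, Finset.mem_univ, true_and] at hg ⊢
      constructor
      · exact monotone_cons_zero g hg
      · simp
    · intro f hf
      simp only [Finset.mem_filter] at hf
      funext i
      cases i using Fin.cases with
      | zero => simp [hf.2]
      | succ i => simp
    · intro g hg
      funext i
      simp
    · intro f hf
      congr 1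
      simp only [Finset.mem_filter] at hf
      rw [Fin.sum_univ_succ]
      simp [hf.2]
  · -- f 0 ≠ 0 part
    rw [Wsum, Finset.mul_sum]
    have key : ∀ f : Fin (a+1) → Fin (b+2), Monotone f → ¬ f 0 = 0 → ∀ i, 1 ≤ (f i : ℕ) := by
      intro f hf h0 i
      have := hf (Fin.zero_le i)
      have : (f 0 : ℕ) ≤ (f i : ℕ) := this
      have h0' : (f 0 : ℕ) ≠ 0 := fun h => h0 (Fin.ext h)
      omega
    apply Finset.sum_nbij'
      (i := fun f => fun i => (⟨(f i : ℕ) - 1, by omega⟩ : Fin (b+1)))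
      (j := fun g => fun i => ((g i).succ : Fin (b+2)))
    · intro f hf
      simp only [Finset.mem_filter, Finset.mem_univ, true_and] at hf ⊢
      have h1 := key f hf.1 hf.2
      intro i j hij
      have := hf.1 hij
      have : (f i : ℕ) ≤ (f j : ℕ) := this
      simp only [Fin.mk_le_mk]
      omega
    · intro g hg
      simp only [Finset.mem_filter, Finset.mem_univ, true_and] at hg ⊢
      constructor
      · intro i j hij
        have := hg hij
        exact Fin.succ_le_succ_iff.2 this
      · exact Fin.succ_ne_zero (g 0)
    · intro f hf
      simp only [Finset.mem_filter, Finset.mem_univ, true_and] at hf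
      have h1 := key f hf.1 hf.2
      funext i
      have := h1 i
      apply Fin.ext
      simp [Fin.val_succ]
      omega
    · intro g hg
      funext i
      apply Fin.ext
      simp [Fin.val_succ]
    · intro f hf
      simp only [Finset.mem_filter, Finset.mem_univ, true_and] at hf
      have h1 := key f hf.1 hf.2
      rw [← pow_add]
      congr 1
      have : ∀ i : Fin (a+1), (f i : ℕ) = ((⟨(f i : ℕ) - 1, by have := h1 i; omega⟩ : Fin (b+1)) : ℕ) + 1 := by
        intro i; simp; have := h1 i; omega
      calc ∑ i, (f i : ℕ) = ∑ i : Fin (a+1), (((⟨(f i : ℕ) - 1, by have := h1 i; omega⟩ : Fin (b+1)) : ℕ) + 1) := Finset.sum_congr rfl (fun i _ => this i)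
        _ = (∑ i : Fin (a+1), ((⟨(f i : ℕ) - 1, by have := h1 i; omega⟩ : Fin (b+1)) : ℕ)) + (a+1) := by
              rw [Finset.sum_add_distrib]; simp
        _ = a + 1 + ∑ i : Fin (a+1), ((⟨(f i : ℕ) - 1, by have := h1 i; omega⟩ : Fin (b+1)) : ℕ) := by ring


lemma sp_qBinom_zero (Q : ℝ) (n : ℕ) : qBinom Q n 0 = 1 := by
  rw [qBinom_eq_Wsum Q (Nat.zero_le n), Nat.sub_zero, Wsum_zero_right]

lemma sp_qBinom_self (Q : ℝ) (n : ℕ) : qBinom Q n n = 1 := by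
  rw [qBinom_eq_Wsum Q (le_refl n), Nat.sub_self, Wsum_zero_left]

lemma sp_qBinom_pascal (Q : ℝ) {r l : ℕ} (h1 : 1 ≤ l) (h2 : l ≤ r) :
    qBinom Q (r + 1) l = qBinom Q r l + Q ^ (r + 1 - l) * qBinom Q r (l - 1) := by
  obtain ⟨l', rfl⟩ : ∃ l', l = l' + 1 := ⟨l - 1, by omega⟩
  rw [qBinom_eq_Wsum Q (by omega : l' + 1 ≤ r + 1),
    qBinom_eq_Wsum Q (by omega : l' + 1 ≤ r),
    qBinom_eq_Wsum Q (by omega : l' + 1 - 1 ≤ r)]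
  have e1 : r + 1 - (l' + 1) = (r - (l' + 1)) + 1 := by omega
  have e2 : r - (l' + 1 - 1) = (r - (l' + 1)) + 1 := by omega
  rw [e1, e2, Wsum_rec, show l' + 1 - 1 = l' from rfl]



noncomputable def sp_PP (q s C : ℝ) (t : ℕ) : ℝ :=
  ∏ i ∈ Finset.range t, qBracket q (C + (i : ℝ) * (s - 1))

noncomputable def sp_Cc (s : ℝ) (m j : ℕ) : ℝ := (j : ℝ) * (1 - s) + s * (m : ℝ)

noncomputable def sp_w (q s : ℝ) (m j r k : ℕ) : ℝ :=
  q ^ (sp_Cc s m j * ((k : ℝ) - (j : ℝ))) *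
    (if j ≤ k then qBinom (q ^ (s - 1)) r (k - j) else 0) *
    sp_PP q s (sp_Cc s m j) (r + j - k)

section
variable {q s : ℝ}

lemma sp_qBracket_eq (a : ℝ) : qBracket q a = (q ^ a - 1) * (1 / (q - 1)) := by
  rw [qBracket, div_eq_mul_one_div]



lemma sp_qm1 (hq1 : q ≠ 1) : q - 1 ≠ 0 := sub_ne_zero.2 hq1

lemma sp_qBracket_add_v (hq1 : q ≠ 1) (a : ℝ) :
    qBracket q a + 1 / (q - 1) = q ^ a * (1 / (q - 1)) := by
  have := sp_qm1 hq1
  rw [qBracket]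
  field_simp
  ring

lemma sp_qBracket_zero : qBracket q 0 = 0 := by
  rw [qBracket, Real.rpow_zero, sub_self, zero_div]

lemma sp_genStirling_zero_right (n : ℕ) : genStirling s q (n + 1) 0 = 0 := rfl

lemma sp_genStirling_of_lt {n k : ℕ} (h : n < k) : genStirling s q n k = 0 := by
  match n, k, h with
  | 0, k + 1, _ => rfl
  | n + 1, k + 1, h => rw [genStirling, if_neg (by omega)]

lemma sp_genStirling_succ_succ (n k : ℕ) (h : k ≤ n) :
    genStirling s q (n + 1) (k + 1)
      = q ^ (s * (n : ℝ) - (s - 1) * (k : ℝ)) * genStirling s q n k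
        + qBracket q (s * (n : ℝ) - (s - 1) * ((k : ℝ) + 1)) * genStirling s q n (k + 1) := by
  rw [genStirling, if_pos (by omega)]

lemma sp_stirling_sum (n : ℕ) (g : ℕ → ℝ) :
    ∑ K ∈ Finset.range (n + 2), genStirling s q (n + 1) K * g K
    = ∑ r ∈ Finset.range (n + 1), genStirling s q n r *
        (q ^ (s * (n : ℝ) - (s - 1) * (r : ℝ)) * g (r + 1)
          + qBracket q (s * (n : ℝ) - (s - 1) * (r : ℝ)) * g r) := by
  have hF0 : qBracket q (s * (n : ℝ) - (s - 1) * ((0 : ℕ) : ℝ)) * genStirling s q n 0 * g 0 = 0 := by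
    match n with
    | 0 => simp [sp_qBracket_zero]
    | n + 1 => simp [sp_genStirling_zero_right]
  rw [Finset.sum_range_succ' (fun K => genStirling s q (n + 1) K * g K) (n + 1)]
  have h0 : genStirling s q (n + 1) 0 * g 0 = 0 := by simp [sp_genStirling_zero_right]
  rw [h0, add_zero]
  rw [show (∑ i ∈ Finset.range (n + 1), genStirling s q (n + 1) (i + 1) * g (i + 1))
      = ∑ i ∈ Finset.range (n + 1),
          (q ^ (s * (n : ℝ) - (s - 1) * (i : ℝ)) * genStirling s q n i * g (i + 1)
            + qBracket q (s * (n : ℝ) - (s - 1) * (((i + 1 : ℕ)) : ℝ)) * genStirling s q n (i + 1) * g (i + 1)) from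
    Finset.sum_congr rfl (fun i hi => by
      rw [sp_genStirling_succ_succ n i (by simp at hi; omega)]
      push_cast
      ring)]
  rw [Finset.sum_add_distrib]
  have hshift : (∑ i ∈ Finset.range (n + 1),
        qBracket q (s * (n : ℝ) - (s - 1) * (((i + 1 : ℕ)) : ℝ)) * genStirling s q n (i + 1) * g (i + 1))
      = ∑ K ∈ Finset.range (n + 1),
        qBracket q (s * (n : ℝ) - (s - 1) * (K : ℝ)) * genStirling s q n K * g K := by
    have := Finset.sum_range_succ'
      (fun K => qBracket q (s * (n : ℝ) - (s - 1) * (K : ℝ)) * genStirling s q n K * g K) (n + 1)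
    rw [Finset.sum_range_succ
      (fun K => qBracket q (s * (n : ℝ) - (s - 1) * (K : ℝ)) * genStirling s q n K * g K) (n + 1)] at this
    rw [sp_genStirling_of_lt (by omega), hF0] at this
    simpa using this.symm
  rw [hshift, ← Finset.sum_add_distrib]
  exact Finset.sum_congr rfl (fun r hr => by ring)

lemma sp_bell_rec (hq : 0 < q) (hq1 : q ≠ 1) (N : ℕ) (x : ℝ) :
    genBellPoly s q (N + 1) x
    = q ^ (s * (N : ℝ)) * (x + 1 / (q - 1)) * genBellPoly s q N (q ^ ((1 : ℝ) - s) * x)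
      - (1 / (q - 1)) * genBellPoly s q N x := by
  unfold genBellPoly
  rw [show N + 1 + 1 = N + 2 from rfl, sp_stirling_sum N (fun k => x ^ k)]
  rw [Finset.mul_sum, Finset.mul_sum, ← Finset.sum_sub_distrib]
  apply Finset.sum_congr rfl
  intro r hr
  have hx : (q ^ ((1 : ℝ) - s) * x) ^ r = q ^ (((1 : ℝ) - s) * (r : ℝ)) * x ^ r := by
    rw [mul_pow, ← Real.rpow_natCast (q ^ ((1 : ℝ) - s)) r, ← Real.rpow_mul hq.le]
  rw [hx]
  have hmerge : q ^ (s * (N : ℝ)) * q ^ (((1 : ℝ) - s) * (r : ℝ))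
      = q ^ (s * (N : ℝ) - (s - 1) * (r : ℝ)) := by
    rw [← Real.rpow_add hq]
    congr 1
    ring
  rw [sp_qBracket_eq]
  linear_combination (- genStirling s q N r * (x + 1 / (q - 1)) * x ^ r) * hmerge



lemma sp_PP_succ (C : ℝ) (t : ℕ) :
    sp_PP q s C (t + 1) = sp_PP q s C t * qBracket q (C + (t : ℝ) * (s - 1)) :=
  Finset.prod_range_succ _ t

lemma sp_Qpow (hq : 0 < q) (t : ℕ) : (q ^ (s - 1)) ^ t = q ^ ((s - 1) * (t : ℝ)) := by
  rw [← Real.rpow_natCast (q ^ (s - 1)) t, ← Real.rpow_mul hq.le]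

lemma sp_rpow_merge (hq : 0 < q) (a b : ℝ) : q ^ a * q ^ b = q ^ (a + b) :=
  (Real.rpow_add hq a b).symm

lemma sp_star (hq : 0 < q) (hq1 : q ≠ 1) (n m r j k : ℕ) :
    q ^ (s * (n : ℝ) - (s - 1) * (r : ℝ)) *
        (sp_w q s m j (r + 1) k + 1 / (q - 1) * sp_w q s m j r k)
    = (if 1 ≤ k then
        q ^ (s * ((n : ℝ) + (m : ℝ)) + (1 - s) * ((k : ℝ) - 1)) * sp_w q s m j r (k - 1) else 0)
      + q ^ (s * ((n : ℝ) + (m : ℝ)) + (1 - s) * (k : ℝ)) * (1 / (q - 1)) * sp_w q s m j r k := by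
  by_cases hjk : j ≤ k
  · obtain ⟨l, rfl⟩ : ∃ l, k = j + l := ⟨k - j, by omega⟩
    rcases Nat.lt_or_ge l 1 with hl | hl
    · -- case l = 0
      interval_cases l
      have w1 : sp_w q s m j (r + 1) (j + 0) = sp_PP q s (sp_Cc s m j) (r + 1) := by
        rw [sp_w, if_pos (by omega : j ≤ j + 0), show j + 0 - j = 0 from by omega,
          show r + 1 + j - (j + 0) = r + 1 from by omega, sp_qBinom_zero,
          show ((j + 0 : ℕ) : ℝ) - (j : ℝ) = 0 from by push_cast; ring, mul_zero,
          Real.rpow_zero, one_mul, one_mul]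
      have w2 : sp_w q s m j r (j + 0) = sp_PP q s (sp_Cc s m j) r := by
        rw [sp_w, if_pos (by omega : j ≤ j + 0), show j + 0 - j = 0 from by omega,
          show r + j - (j + 0) = r from by omega, sp_qBinom_zero,
          show ((j + 0 : ℕ) : ℝ) - (j : ℝ) = 0 from by push_cast; ring, mul_zero,
          Real.rpow_zero, one_mul, one_mul]
      have hm : q ^ (s * (n : ℝ) - (s - 1) * (r : ℝ)) * q ^ (sp_Cc s m j + (r : ℝ) * (s - 1))
          = q ^ (s * ((n : ℝ) + (m : ℝ)) + (1 - s) * ((j + 0 : ℕ) : ℝ)) := by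
        rw [sp_rpow_merge hq]; congr 1; simp only [sp_Cc]; push_cast; ring
      rw [w1, w2, sp_PP_succ, sp_qBracket_eq]
      rcases Nat.eq_zero_or_pos j with hj | hj
      · subst hj
        rw [if_neg (by omega)]
        linear_combination (sp_PP q s (sp_Cc s m 0) r * (1 / (q - 1))) * hm
      · rw [if_pos (by omega)]
        have w3 : sp_w q s m j r (j + 0 - 1) = 0 := by
          rw [sp_w, if_neg (by omega)]; ring
        rw [w3]
        linear_combination (sp_PP q s (sp_Cc s m j) r * (1 / (q - 1))) * hm
    · rcases Nat.lt_or_ge r ((j + l) - j) with hr | hr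
      · rcases Nat.lt_or_ge (r + 1) l with hr2 | hr2
        · -- l ≥ r + 2 : everything vanishes
          have w1 : sp_w q s m j (r + 1) (j + l) = 0 := by
            rw [sp_w, if_pos (by omega), show j + l - j = l from by omega,
              qBinom_of_gt _ (by omega)]; ring
          have w2 : sp_w q s m j r (j + l) = 0 := by
            rw [sp_w, if_pos (by omega), show j + l - j = l from by omega,
              qBinom_of_gt _ (by omega)]; ring
          have w3 : sp_w q s m j r (j + l - 1) = 0 := by
            rw [sp_w, if_pos (by omega), show j + l - 1 - j = l - 1 from by omega,
              qBinom_of_gt _ (by omega)]; ring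
          rw [w1, w2, w3, if_pos (by omega)]; ring
        · -- l = r + 1
          have hlr : l = r + 1 := by omega
          subst hlr
          have w2 : sp_w q s m j r (j + (r + 1)) = 0 := by
            rw [sp_w, if_pos (by omega), show j + (r + 1) - j = r + 1 from by omega,
              qBinom_of_gt _ (by omega)]; ring
          have w1 : sp_w q s m j (r + 1) (j + (r + 1))
              = q ^ (sp_Cc s m j * ((r : ℝ) + 1)) := by
            rw [sp_w, if_pos (by omega), show j + (r + 1) - j = r + 1 from by omega,
              show r + 1 + j - (j + (r + 1)) = 0 from by omega, sp_qBinom_self,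
              show ((j + (r + 1) : ℕ) : ℝ) - (j : ℝ) = (r : ℝ) + 1 from by push_cast; ring]
            rw [sp_PP]; simp
          have w3 : sp_w q s m j r (j + (r + 1) - 1) = q ^ (sp_Cc s m j * (r : ℝ)) := by
            rw [sp_w, if_pos (by omega), show j + (r + 1) - 1 - j = r from by omega,
              show r + j - (j + (r + 1) - 1) = 0 from by omega, sp_qBinom_self,
              show ((j + (r + 1) - 1 : ℕ) : ℝ) - (j : ℝ) = (r : ℝ) from by
                rw [Nat.cast_sub (by omega)]; push_cast; ring]
            rw [sp_PP]; simp
          rw [w1, w2, w3, if_pos (by omega)]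
          have hm : q ^ (s * (n : ℝ) - (s - 1) * (r : ℝ)) * q ^ (sp_Cc s m j * ((r : ℝ) + 1))
              = q ^ (s * ((n : ℝ) + (m : ℝ)) + (1 - s) * (((j + (r + 1) : ℕ) : ℝ) - 1))
                * q ^ (sp_Cc s m j * (r : ℝ)) := by
            rw [sp_rpow_merge hq, sp_rpow_merge hq]; congr 1
            simp only [sp_Cc]; push_cast; ring
          linear_combination hm
      · -- main case 1 ≤ l ≤ r
        have hlr : l ≤ r := by omega
        have w2 : sp_w q s m j r (j + l)
            = q ^ (sp_Cc s m j * (l : ℝ)) * qBinom (q ^ (s - 1)) r l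
              * sp_PP q s (sp_Cc s m j) (r - l) := by
          rw [sp_w, if_pos (by omega), show j + l - j = l from by omega,
            show r + j - (j + l) = r - l from by omega,
            show ((j + l : ℕ) : ℝ) - (j : ℝ) = (l : ℝ) from by push_cast; ring]
        have w1 : sp_w q s m j (r + 1) (j + l)
            = q ^ (sp_Cc s m j * (l : ℝ))
              * (qBinom (q ^ (s - 1)) r l
                  + q ^ ((s - 1) * ((r + 1 - l : ℕ) : ℝ)) * qBinom (q ^ (s - 1)) r (l - 1))
              * sp_PP q s (sp_Cc s m j) (r + 1 - l) := by
          rw [sp_w, if_pos (by omega), show j + l - j = l from by omega,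
            show r + 1 + j - (j + l) = r + 1 - l from by omega,
            show ((j + l : ℕ) : ℝ) - (j : ℝ) = (l : ℝ) from by push_cast; ring,
            sp_qBinom_pascal _ hl hlr, sp_Qpow hq]
        have w3 : sp_w q s m j r (j + l - 1)
            = q ^ (sp_Cc s m j * ((l : ℝ) - 1)) * qBinom (q ^ (s - 1)) r (l - 1)
              * sp_PP q s (sp_Cc s m j) (r - l + 1) := by
          rw [sp_w, if_pos (by omega), show j + l - 1 - j = l - 1 from by omega,
            show r + j - (j + l - 1) = r - l + 1 from by omega,
            show ((j + l - 1 : ℕ) : ℝ) - (j : ℝ) = (l : ℝ) - 1 from by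
              rw [Nat.cast_sub (by omega)]; push_cast; ring]
        rw [w1, w2, w3, if_pos (by omega)]
        rw [show r + 1 - l = (r - l) + 1 from by omega, sp_PP_succ, sp_qBracket_eq]
        have hm1 : q ^ (s * (n : ℝ) - (s - 1) * (r : ℝ)) * q ^ (sp_Cc s m j * (l : ℝ))
              * q ^ (sp_Cc s m j + ((r - l : ℕ) : ℝ) * (s - 1))
            = q ^ (s * ((n : ℝ) + (m : ℝ)) + (1 - s) * ((j + l : ℕ) : ℝ))
              * q ^ (sp_Cc s m j * (l : ℝ)) := by
          rw [sp_rpow_merge hq, sp_rpow_merge hq, sp_rpow_merge hq]; congr 1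
          simp only [sp_Cc]
          rw [Nat.cast_sub (by omega : l ≤ r)]; push_cast; ring
        have hm2 : q ^ (s * (n : ℝ) - (s - 1) * (r : ℝ)) * q ^ (sp_Cc s m j * (l : ℝ))
              * q ^ ((s - 1) * ((r - l + 1 : ℕ) : ℝ))
            = q ^ (s * ((n : ℝ) + (m : ℝ)) + (1 - s) * (((j + l : ℕ) : ℝ) - 1))
              * q ^ (sp_Cc s m j * ((l : ℝ) - 1)) := by
          rw [sp_rpow_merge hq, sp_rpow_merge hq, sp_rpow_merge hq]; congr 1
          simp only [sp_Cc]
          push_cast [Nat.cast_sub (show l ≤ r from hlr)]; ring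
        linear_combination
          (qBinom (q ^ (s - 1)) r l * sp_PP q s (sp_Cc s m j) (r - l) * (1 / (q - 1))) * hm1
          + (qBinom (q ^ (s - 1)) r (l - 1) * sp_PP q s (sp_Cc s m j) (r - l)
              * (q ^ (sp_Cc s m j + ((r - l : ℕ) : ℝ) * (s - 1)) - 1) * (1 / (q - 1))) * hm2
  · -- j > k
    have w1 : sp_w q s m j (r + 1) k = 0 := by rw [sp_w, if_neg hjk]; ring
    have w2 : sp_w q s m j r k = 0 := by rw [sp_w, if_neg hjk]; ring
    have w3 : sp_w q s m j r (k - 1) = 0 := by rw [sp_w, if_neg (by omega)]; ring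
    rw [w1, w2, w3]
    split <;> ring

lemma sp_w_vanish {m j r k : ℕ} (h : r + j < k) : sp_w q s m j r k = 0 := by
  by_cases hj : j ≤ k
  · rw [sp_w, if_pos hj, qBinom_of_gt _ (by omega)]; ring
  · rw [sp_w, if_neg hj]; ring

lemma sp_key (hq : 0 < q) (hq1 : q ≠ 1) (n m r j : ℕ) (hr : r ≤ n) (hj : j ≤ m) (x : ℝ) :
    q ^ (s * (n : ℝ) - (s - 1) * (r : ℝ)) *
        (∑ k ∈ Finset.range (n + m + 2), x ^ k * sp_w q s m j (r + 1) k)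
      + qBracket q (s * (n : ℝ) - (s - 1) * (r : ℝ)) *
        (∑ k ∈ Finset.range (n + m + 2), x ^ k * sp_w q s m j r k)
    = ∑ k ∈ Finset.range (n + m + 3),
        (q ^ (s * ((n : ℝ) + (m : ℝ))) * (x + 1 / (q - 1)) * (q ^ ((1 : ℝ) - s) * x) ^ k
            * sp_w q s m j r k
          - 1 / (q - 1) * x ^ k * sp_w q s m j r k) := by
  have ext1 : (∑ k ∈ Finset.range (n + m + 3), x ^ k * sp_w q s m j (r + 1) k)
      = ∑ k ∈ Finset.range (n + m + 2), x ^ k * sp_w q s m j (r + 1) k := by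
    rw [Finset.sum_range_succ, sp_w_vanish (by omega), mul_zero, add_zero]
  have ext2 : (∑ k ∈ Finset.range (n + m + 3), x ^ k * sp_w q s m j r k)
      = ∑ k ∈ Finset.range (n + m + 2), x ^ k * sp_w q s m j r k := by
    rw [Finset.sum_range_succ, sp_w_vanish (by omega), mul_zero, add_zero]
  rw [← ext1, ← ext2, Finset.mul_sum, Finset.mul_sum, ← Finset.sum_add_distrib]
  have step1 : ∀ k ∈ Finset.range (n + m + 3),
      q ^ (s * (n : ℝ) - (s - 1) * (r : ℝ)) * (x ^ k * sp_w q s m j (r + 1) k)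
        + qBracket q (s * (n : ℝ) - (s - 1) * (r : ℝ)) * (x ^ k * sp_w q s m j r k)
      = x ^ k * ((if 1 ≤ k then
            q ^ (s * ((n : ℝ) + (m : ℝ)) + (1 - s) * ((k : ℝ) - 1)) * sp_w q s m j r (k - 1)
          else 0)
          + q ^ (s * ((n : ℝ) + (m : ℝ)) + (1 - s) * (k : ℝ)) * (1 / (q - 1)) * sp_w q s m j r k)
        - 1 / (q - 1) * (x ^ k * sp_w q s m j r k) := by
    intro k hk
    rw [sp_qBracket_eq]
    linear_combination (x ^ k) * sp_star hq hq1 n m r j k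
  rw [Finset.sum_congr rfl step1, Finset.sum_sub_distrib]
  have split2 : ∀ k ∈ Finset.range (n + m + 3),
      x ^ k * ((if 1 ≤ k then
            q ^ (s * ((n : ℝ) + (m : ℝ)) + (1 - s) * ((k : ℝ) - 1)) * sp_w q s m j r (k - 1)
          else 0)
          + q ^ (s * ((n : ℝ) + (m : ℝ)) + (1 - s) * (k : ℝ)) * (1 / (q - 1)) * sp_w q s m j r k)
      = (if 1 ≤ k then
            x ^ k * (q ^ (s * ((n : ℝ) + (m : ℝ)) + (1 - s) * ((k : ℝ) - 1)) * sp_w q s m j r (k - 1))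
          else 0)
        + x ^ k * (q ^ (s * ((n : ℝ) + (m : ℝ)) + (1 - s) * (k : ℝ)) * (1 / (q - 1)) * sp_w q s m j r k) := by
    intro k hk
    split <;> ring
  rw [Finset.sum_congr rfl split2, Finset.sum_add_distrib]
  have shift : (∑ k ∈ Finset.range (n + m + 3),
        (if 1 ≤ k then
          x ^ k * (q ^ (s * ((n : ℝ) + (m : ℝ)) + (1 - s) * ((k : ℝ) - 1)) * sp_w q s m j r (k - 1))
        else 0))
      = ∑ k ∈ Finset.range (n + m + 3),
          q ^ (s * ((n : ℝ) + (m : ℝ)) + (1 - s) * (k : ℝ)) * x ^ (k + 1) * sp_w q s m j r k := by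
    rw [Finset.sum_range_succ' _ (n + m + 2)]
    rw [Finset.sum_range_succ
      (fun k => q ^ (s * ((n : ℝ) + (m : ℝ)) + (1 - s) * (k : ℝ)) * x ^ (k + 1) * sp_w q s m j r k)
      (n + m + 2)]
    rw [sp_w_vanish (by omega : r + j < n + m + 2), mul_zero, add_zero, if_neg (by omega)]
    rw [add_zero]
    apply Finset.sum_congr rfl
    intro i hi
    rw [if_pos (by omega), show i + 1 - 1 = i from rfl,
      show ((i + 1 : ℕ) : ℝ) - 1 = (i : ℝ) from by push_cast; ring]
    ring
  rw [shift]
  have final : ∀ k ∈ Finset.range (n + m + 3),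
      q ^ (s * ((n : ℝ) + (m : ℝ)) + (1 - s) * (k : ℝ)) * x ^ (k + 1) * sp_w q s m j r k
        + x ^ k * (q ^ (s * ((n : ℝ) + (m : ℝ)) + (1 - s) * (k : ℝ)) * (1 / (q - 1)) * sp_w q s m j r k)
      = q ^ (s * ((n : ℝ) + (m : ℝ))) * (x + 1 / (q - 1)) * (q ^ ((1 : ℝ) - s) * x) ^ k
          * sp_w q s m j r k := by
    intro k hk
    have hx : (q ^ ((1 : ℝ) - s) * x) ^ k = q ^ (((1 : ℝ) - s) * (k : ℝ)) * x ^ k := by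
      rw [mul_pow, ← Real.rpow_natCast (q ^ ((1 : ℝ) - s)) k, ← Real.rpow_mul hq.le]
    have hm : q ^ (s * ((n : ℝ) + (m : ℝ))) * q ^ (((1 : ℝ) - s) * (k : ℝ))
        = q ^ (s * ((n : ℝ) + (m : ℝ)) + (1 - s) * (k : ℝ)) := by
      rw [sp_rpow_merge hq]
    rw [hx]
    linear_combination (-(x + 1 / (q - 1)) * x ^ k * sp_w q s m j r k) * hm
  rw [← Finset.sum_add_distrib, Finset.sum_congr rfl final, ← Finset.sum_sub_distrib]
  exact Finset.sum_congr rfl (fun k _ => by ring)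

lemma sp_trunc (m n : ℕ) (x : ℝ) {K1 K2 : ℕ} (h1 : n + m + 1 ≤ K1) (h2 : n + m + 1 ≤ K2) :
    (∑ r ∈ Finset.range (n + 1), ∑ j ∈ Finset.range (m + 1), ∑ k ∈ Finset.range K1,
        genStirling s q m j * genStirling s q n r * x ^ k * sp_w q s m j r k)
    = ∑ r ∈ Finset.range (n + 1), ∑ j ∈ Finset.range (m + 1), ∑ k ∈ Finset.range K2,
        genStirling s q m j * genStirling s q n r * x ^ k * sp_w q s m j r k := by
  have gen : ∀ K, n + m + 1 ≤ K →
      (∑ r ∈ Finset.range (n + 1), ∑ j ∈ Finset.range (m + 1), ∑ k ∈ Finset.range K,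
          genStirling s q m j * genStirling s q n r * x ^ k * sp_w q s m j r k)
      = ∑ r ∈ Finset.range (n + 1), ∑ j ∈ Finset.range (m + 1), ∑ k ∈ Finset.range (n + m + 1),
          genStirling s q m j * genStirling s q n r * x ^ k * sp_w q s m j r k := by
    intro K hK
    refine Finset.sum_congr rfl fun r hr => Finset.sum_congr rfl fun j hj => ?_
    simp only [Finset.mem_range] at hr hj
    refine (Finset.sum_subset (Finset.range_subset_range.2 hK) fun k hk hnk => ?_).symm
    simp only [Finset.mem_range] at hk hnk
    rw [sp_w_vanish (by omega), mul_zero]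
  rw [gen K1 h1, gen K2 h2]

lemma sp_main (hq : 0 < q) (hq1 : q ≠ 1) (m : ℕ) : ∀ (n : ℕ) (x : ℝ) (K : ℕ), n + m + 1 ≤ K →
    (∑ r ∈ Finset.range (n + 1), ∑ j ∈ Finset.range (m + 1), ∑ k ∈ Finset.range K,
        genStirling s q m j * genStirling s q n r * x ^ k * sp_w q s m j r k)
    = genBellPoly s q (n + m) x := by
  intro n
  induction n with
  | zero =>
    intro x K hK
    rw [sp_trunc m 0 x hK (le_refl (0 + m + 1))]
    rw [Finset.sum_range_one]
    have inner : ∀ j ∈ Finset.range (m + 1),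
        (∑ k ∈ Finset.range (0 + m + 1),
          genStirling s q m j * genStirling s q 0 0 * x ^ k * sp_w q s m j 0 k)
        = genStirling s q m j * x ^ j := by
      intro j hj
      simp only [Finset.mem_range] at hj
      rw [Finset.sum_eq_single j]
      · have hw : sp_w q s m j 0 j = 1 := by
          rw [sp_w, if_pos (le_refl j), Nat.sub_self, sp_qBinom_zero,
            show (j : ℝ) - (j : ℝ) = 0 from by ring, mul_zero, Real.rpow_zero,
            show 0 + j - j = 0 from by omega]
          rw [sp_PP]
          simp
        rw [hw, show genStirling s q 0 0 = 1 from rfl]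
        ring
      · intro k hk hkj
        rcases Nat.lt_or_ge k j with h | h
        · rw [sp_w, if_neg (by omega)]; ring
        · rw [sp_w, if_pos (by omega), qBinom_of_gt _ (by omega : 0 < k - j)]; ring
      · intro hj2
        simp only [Finset.mem_range] at hj2
        omega
    rw [Finset.sum_congr rfl inner]
    rw [genBellPoly, show 0 + m = m from by omega]
  | succ n ih =>
    intro x K hK
    rw [sp_trunc m (n + 1) x hK (by omega : n + 1 + m + 1 ≤ n + m + 2)]
    have pull1 : ∀ r ∈ Finset.range (n + 2),
        (∑ j ∈ Finset.range (m + 1), ∑ k ∈ Finset.range (n + m + 2),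
          genStirling s q m j * genStirling s q (n + 1) r * x ^ k * sp_w q s m j r k)
        = genStirling s q (n + 1) r * ∑ j ∈ Finset.range (m + 1), genStirling s q m j *
            ∑ k ∈ Finset.range (n + m + 2), x ^ k * sp_w q s m j r k := by
      intro r _
      rw [Finset.mul_sum]
      refine Finset.sum_congr rfl fun j _ => ?_
      rw [Finset.mul_sum, Finset.mul_sum]
      exact Finset.sum_congr rfl fun k _ => by ring
    rw [show n + 1 + 1 = n + 2 from rfl, Finset.sum_congr rfl pull1]
    rw [sp_stirling_sum n (fun r => ∑ j ∈ Finset.range (m + 1), genStirling s q m j *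
          ∑ k ∈ Finset.range (n + m + 2), x ^ k * sp_w q s m j r k)]
    rw [show n + 1 + m = (n + m) + 1 from by omega]
    rw [sp_bell_rec hq hq1 (n + m) x]
    rw [← ih (q ^ ((1 : ℝ) - s) * x) (n + m + 3) (by omega), ← ih x (n + m + 3) (by omega)]
    rw [Finset.mul_sum, Finset.mul_sum, ← Finset.sum_sub_distrib]
    refine Finset.sum_congr rfl fun r hr => ?_
    simp only [Finset.mem_range] at hr
    have pull2 : ∀ (y : ℝ), (∑ j ∈ Finset.range (m + 1), ∑ k ∈ Finset.range (n + m + 3),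
          genStirling s q m j * genStirling s q n r * y ^ k * sp_w q s m j r k)
        = ∑ j ∈ Finset.range (m + 1), genStirling s q m j * genStirling s q n r *
            ∑ k ∈ Finset.range (n + m + 3), y ^ k * sp_w q s m j r k := by
      intro y
      refine Finset.sum_congr rfl fun j _ => ?_
      rw [Finset.mul_sum]
      exact Finset.sum_congr rfl fun k _ => by ring
    rw [pull2, pull2]
    rw [show s * ((n + m : ℕ) : ℝ) = s * ((n : ℝ) + (m : ℝ)) from by push_cast; ring]
    refine Eq.trans ?_ (Eq.symm ?_)
      (b := ∑ j ∈ Finset.range (m + 1), genStirling s q m j * genStirling s q n r *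
        (q ^ (s * ((n : ℝ) + (m : ℝ))) * (x + 1 / (q - 1)) *
            (∑ k ∈ Finset.range (n + m + 3), (q ^ ((1 : ℝ) - s) * x) ^ k * sp_w q s m j r k)
          - 1 / (q - 1) * (∑ k ∈ Finset.range (n + m + 3), x ^ k * sp_w q s m j r k)))
    · rw [Finset.mul_sum, Finset.mul_sum, ← Finset.sum_add_distrib, Finset.mul_sum]
      refine Finset.sum_congr rfl fun j hj => ?_
      simp only [Finset.mem_range] at hj
      have hkey := sp_key (s := s) hq hq1 n m r j (by omega) (by omega) x
      have hsplit : (∑ k ∈ Finset.range (n + m + 3),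
            (q ^ (s * ((n : ℝ) + (m : ℝ))) * (x + 1 / (q - 1)) * (q ^ ((1 : ℝ) - s) * x) ^ k
                * sp_w q s m j r k
              - 1 / (q - 1) * x ^ k * sp_w q s m j r k))
          = q ^ (s * ((n : ℝ) + (m : ℝ))) * (x + 1 / (q - 1)) *
              (∑ k ∈ Finset.range (n + m + 3), (q ^ ((1 : ℝ) - s) * x) ^ k * sp_w q s m j r k)
            - 1 / (q - 1) * (∑ k ∈ Finset.range (n + m + 3), x ^ k * sp_w q s m j r k) := by
        rw [Finset.sum_sub_distrib, Finset.mul_sum, Finset.mul_sum]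
        congr 1
        · exact Finset.sum_congr rfl fun k _ => by ring
        · exact Finset.sum_congr rfl fun k _ => by ring
      rw [hsplit] at hkey
      linear_combination (genStirling s q m j * genStirling s q n r) * hkey
    · rw [Finset.mul_sum, Finset.mul_sum, ← Finset.sum_sub_distrib]
      exact Finset.sum_congr rfl fun j _ => by ring

end

/-- Generalized Spivey formula for Bell polynomials, second form. -/
theorem spivey_bell_poly_second (q s : ℝ) (hq : 0 < q) (hq1 : q ≠ 1) (n m : ℕ) (x : ℝ) :
    genBellPoly s q (n + m) x
    = ∑ r ∈ Finset.range (n + 1), ∑ j ∈ Finset.range (m + 1),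
        ∑ k ∈ Finset.range (n + m + 1),
        genStirling s q m j *
          q ^ (((j : ℝ) * (1 - s) + s * (m : ℝ)) * ((k : ℝ) - (j : ℝ))) *
          (if j ≤ k then qBinom (q ^ (s - 1)) r (k - j) else 0) *
          genStirling s q n r * x ^ k *
          ∏ i ∈ Finset.range (r + j - k),
            qBracket q ((j : ℝ) * (1 - s) + s * (m : ℝ) + (i : ℝ) * (s - 1)) := by
  rw [← sp_main (s := s) hq hq1 m n x (n + m + 1) (le_refl _)]
  refine Finset.sum_congr rfl fun r hr => Finset.sum_congr rfl fun j hj =>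
    Finset.sum_congr rfl fun k hk => ?_
  simp only [sp_w, sp_Cc, sp_PP]
  ring
end

section
/- For all natural numbers n, m, j: S_{s,q}[n+1, m+j+1] = Σ_{k=m}^{n} Σ_{r=0}^{n−k} S_{s,q}[k,m] · q^{r((k−m)(s−1)+k+1) + k + (k−m)(s−1)} · binom(n−k, r)_{q^s} · S_{s,q}[r,j] · Π_{i=0}^{n−k−r−1} [(k−m)(s−1) + k + 1 + s·i]_q (the outer sum being empty, hence 0, when m > n). -/
open Classical in
noncomputable def qSum (Q : ℝ) (M K : ℕ) : ℝ :=
  ∑ f ∈ Finset.univ.filter (fun f : Fin M → Fin (K + 1) => Monotone f),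
    Q ^ (∑ i, (f i : ℕ))

lemma qBinom_eq (Q : ℝ) {n k : ℕ} (h : k ≤ n) : qBinom Q n k = qSum Q (n - k) k := by
  rw [qBinom, if_pos h]; rfl

lemma qSum_zero_left (Q : ℝ) (K : ℕ) : qSum Q 0 K = 1 := by
  rw [qSum]
  have h1 : ∀ f : Fin 0 → Fin (K+1), Monotone f := fun f a b _ => absurd a.2 (Nat.not_lt_zero _)
  rw [Finset.filter_true_of_mem (fun f _ => h1 f)]
  simp

lemma qSum_zero_right (Q : ℝ) (M : ℕ) : qSum Q M 0 = 1 := by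
  rw [qSum]
  have h1 : ∀ f : Fin M → Fin 1, Monotone f := fun f a b _ => by
    simp [Fin.le_def, Fin.eq_zero (f a), Fin.eq_zero (f b)]
  rw [Finset.filter_true_of_mem (fun f _ => h1 f)]
  have : ∀ f : Fin M → Fin 1, (∑ i, ((f i : ℕ))) = 0 := fun f => by
    simp [Fin.eq_zero (f _)]
  simp [this]

open Finset in
lemma qSum_rec (Q : ℝ) (d r : ℕ) :
    qSum Q (d + 1) (r + 1) = qSum Q d (r + 1) + Q ^ (d + 1) * qSum Q (d + 1) r := by
  classical
  rw [qSum, qSum, qSum]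
  rw [← Finset.sum_filter_add_sum_filter_not
    (Finset.univ.filter (fun f : Fin (d+1) → Fin (r+2) => Monotone f)) (fun f => f 0 = 0)]
  congr 1
  · -- f 0 = 0 case ↔ monotone g : Fin d → Fin (r+2)
    apply Finset.sum_nbij' (i := fun f => f ∘ Fin.succ)
      (j := fun g => Fin.cases 0 g)
    · intro f hf
      simp only [Finset.mem_filter, Finset.mem_univ, true_and] at hf ⊢
      exact hf.1.comp (Fin.strictMono_succ.monotone)
    · intro g hg
      simp only [Finset.mem_filter, Finset.mem_univ, true_and] at hg ⊢
      constructor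
      · intro a b hab
        induction a using Fin.cases with
        | zero => exact Fin.zero_le _
        | succ i =>
          induction b using Fin.cases with
          | zero => exact absurd hab (by simp [Fin.le_def, Fin.lt_def])
          | succ k =>
            simpa using hg (Fin.succ_le_succ_iff.mp hab)
      · simp
    · intro f hf
      simp only [Finset.mem_filter, Finset.mem_univ, true_and] at hf
      funext x
      induction x using Fin.cases with
      | zero => simpa using hf.2.symm
      | succ i => simp
    · intro g hg
      funext x; simp
    · intro f hf
      simp only [Finset.mem_filter, Finset.mem_univ, true_and] at hf
      congr 1
      rw [Fin.sum_univ_succ, hf.2]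
      simp
  · -- f 0 ≠ 0 case ↔ monotone h : Fin (d+1) → Fin (r+1), weight Q^(d+1)
    rw [Finset.mul_sum]
    apply Finset.sum_nbij' (i := fun f => fun x => (⟨(f x : ℕ) - 1, by omega⟩ : Fin (r+1)))
      (j := fun g => fun x => Fin.succ (g x))
    · intro f hf
      simp only [Finset.mem_filter, Finset.mem_univ, true_and] at hf ⊢
      intro a b hab
      simp only [Fin.mk_le_mk]
      exact Nat.sub_le_sub_right (hf.1 hab) 1
    · intro g hg
      simp only [Finset.mem_filter, Finset.mem_univ, true_and] at hg ⊢
      constructor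
      · intro a b hab
        exact Fin.succ_le_succ_iff.mpr (hg hab)
      · exact Fin.succ_ne_zero _
    · intro f hf
      simp only [Finset.mem_filter, Finset.mem_univ, true_and] at hf
      have hpos : ∀ x, 1 ≤ (f x : ℕ) := by
        intro x
        have h0 : (0 : ℕ) < (f 0 : ℕ) := by
          rcases Nat.eq_zero_or_pos (f 0 : ℕ) with h | h
          · exact absurd (Fin.ext h) hf.2
          · exact h
        have := hf.1 (Fin.zero_le x)
        omega
      funext x
      apply Fin.ext
      have := hpos x
      simp only [Fin.val_succ]
      omega
    · intro g hg
      funext x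
      apply Fin.ext
      simp
    · intro f hf
      simp only [Finset.mem_filter, Finset.mem_univ, true_and] at hf
      have hpos : ∀ x, 1 ≤ (f x : ℕ) := by
        intro x
        have h0 : (0 : ℕ) < (f 0 : ℕ) := by
          rcases Nat.eq_zero_or_pos (f 0 : ℕ) with h | h
          · exact absurd (Fin.ext h) hf.2
          · exact h
        have := hf.1 (Fin.zero_le x)
        omega
      have hsum : ∑ i : Fin (d+1), (f i : ℕ)
          = (∑ i : Fin (d+1), ((f i : ℕ) - 1)) + (d + 1) := by
        calc ∑ i : Fin (d+1), (f i : ℕ)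
            = ∑ i : Fin (d+1), (((f i : ℕ) - 1) + 1) :=
              Finset.sum_congr rfl (fun i _ => (Nat.sub_add_cancel (hpos i)).symm)
          _ = (∑ i : Fin (d+1), ((f i : ℕ) - 1)) + ∑ _i : Fin (d+1), 1 :=
              Finset.sum_add_distrib
          _ = (∑ i : Fin (d+1), ((f i : ℕ) - 1)) + (d + 1) := by simp
      rw [hsum, pow_add]
      rw [mul_comm]

lemma qBinom_zero_right (Q : ℝ) (N : ℕ) : qBinom Q N 0 = 1 := by
  rw [qBinom_eq Q (Nat.zero_le N), Nat.sub_zero, qSum_zero_right]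

lemma qBinom_succ_succ (Q : ℝ) (N r : ℕ) :
    qBinom Q (N + 1) (r + 1) = qBinom Q N (r + 1) + Q ^ (N - r) * qBinom Q N r := by
  rcases lt_trichotomy r N with h | h | h
  · obtain ⟨d, rfl⟩ : ∃ d, N = r + 1 + d := ⟨N - (r+1), by omega⟩
    rw [qBinom_eq Q (show r + 1 ≤ r + 1 + d + 1 by omega),
      qBinom_eq Q (show r + 1 ≤ r + 1 + d by omega),
      qBinom_eq Q (show r ≤ r + 1 + d by omega),
      show r + 1 + d + 1 - (r + 1) = d + 1 by omega,
      show r + 1 + d - (r + 1) = d by omega,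
      show r + 1 + d - r = d + 1 by omega]
    exact qSum_rec Q d r
  · subst h
    rw [qBinom_eq Q (le_refl (r+1)), Nat.sub_self, qSum_zero_left,
      qBinom_of_gt Q (by omega), qBinom_eq Q (le_refl r), Nat.sub_self, qSum_zero_left]
    simp
  · rw [qBinom_of_gt Q (by omega), qBinom_of_gt Q (by omega), qBinom_of_gt Q h]
    simp

lemma genStirling_of_lt (s q : ℝ) : ∀ {n k : ℕ}, n < k → genStirling s q n k = 0
  | 0, _ + 1, _ => rfl
  | _ + 1, _ + 1, h => by rw [genStirling, if_neg (by omega)]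

lemma genStirling_succ_succ (s q : ℝ) (n k : ℕ) :
    genStirling s q (n + 1) (k + 1)
      = q ^ (s * (n : ℝ) - (s - 1) * (k : ℝ)) * genStirling s q n k
        + qBracket q (s * (n : ℝ) - (s - 1) * ((k : ℝ) + 1)) * genStirling s q n (k + 1) := by
  by_cases h : k + 1 ≤ n + 1
  · rw [genStirling, if_pos h]
  · rw [genStirling, if_neg h, genStirling_of_lt s q (show n < k by omega),
      genStirling_of_lt s q (show n < k + 1 by omega)]
    ring

lemma qBracket_add {q : ℝ} (hq : 0 < q) (hq1 : q ≠ 1) (u v : ℝ) :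
    qBracket q (u + v) = q ^ u * qBracket q v + qBracket q u := by
  have h1 : q - 1 ≠ 0 := sub_ne_zero.mpr hq1
  unfold qBracket
  rw [Real.rpow_add hq]
  field_simp
  ring

lemma rpow_nat_mul {q : ℝ} (hq : 0 < q) (t : ℝ) (n : ℕ) :
    q ^ (t * (n : ℝ)) = (q ^ t) ^ n := by
  rw [Real.rpow_mul hq.le t (n : ℝ), Real.rpow_natCast]

noncomputable def GHt (q s A : ℝ) (N j r : ℕ) : ℝ :=
  q ^ ((r : ℝ) * A) * qBinom (q ^ s) N r * genStirling s q r j *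
    ∏ i ∈ Finset.range (N - r), qBracket q (A + s * (i : ℝ))

noncomputable def GHu (q s A : ℝ) (N j r : ℕ) : ℝ :=
  q ^ ((r : ℝ) * A) * qBinom (q ^ s) N r * genStirling s q r j *
    ∏ i ∈ Finset.range (N + 1 - r), qBracket q (A + s * (i : ℝ))

noncomputable def GH (q s A : ℝ) (N j : ℕ) : ℝ :=
  ∑ r ∈ Finset.range (N + 1), GHt q s A N j r

lemma GHt_split {q : ℝ} (hq : 0 < q) (hq1 : q ≠ 1) (s A : ℝ) (N j r : ℕ) (hr : r ≤ N) :
    GHt q s A (N + 1) (j + 1) (r + 1)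
      = GHu q s A N (j + 1) (r + 1)
        + (q ^ (A + s * (N : ℝ) - (s - 1) * (j : ℝ)) * GHt q s A N j r
           + qBracket q (A + s * (N : ℝ) - (s - 1) * ((j : ℝ) + 1)) * GHt q s A N (j + 1) r
           - GHu q s A N (j + 1) r) := by
  obtain ⟨d, rfl⟩ : ∃ d, N = r + d := ⟨N - r, by omega⟩
  unfold GHt GHu
  rw [show r + d + 1 - (r + 1) = d by omega, show r + d - r = d by omega,
    show r + d + 1 - r = d + 1 by omega]
  rw [Finset.prod_range_succ]
  rw [qBinom_succ_succ]
  rw [show r + d - r = d by omega]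
  rw [genStirling_succ_succ s q r j]
  push_cast
  have h2 : qBracket q (A + s * ((r : ℝ) + (d : ℝ)) - (s - 1) * ((j : ℝ) + 1))
      = q ^ (A + s * (d : ℝ)) * qBracket q (s * (r : ℝ) - (s - 1) * ((j : ℝ) + 1))
        + qBracket q (A + s * (d : ℝ)) := by
    rw [← qBracket_add hq hq1]; congr 1; ring
  have h3 : q ^ (A + s * ((r : ℝ) + (d : ℝ)) - (s - 1) * (j : ℝ))
      = q ^ (A + s * (d : ℝ)) * q ^ (s * (r : ℝ) - (s - 1) * (j : ℝ)) := by
    rw [← Real.rpow_add hq]; congr 1; ring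
  have h4 : q ^ (((r : ℝ) + 1) * A) * (q ^ s) ^ d
      = q ^ ((r : ℝ) * A) * q ^ (A + s * (d : ℝ)) := by
    rw [← rpow_nat_mul hq s d, ← Real.rpow_add hq, ← Real.rpow_add hq]; congr 1; ring
  rw [h2, h3]
  linear_combination (qBinom (q ^ s) (r + d) r *
    (q ^ (s * (r : ℝ) - (s - 1) * (j : ℝ)) * genStirling s q r j
      + qBracket q (s * (r : ℝ) - (s - 1) * ((j : ℝ) + 1)) * genStirling s q r (j + 1)) *
    ∏ i ∈ Finset.range d, qBracket q (A + s * (i : ℝ))) * h4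

lemma GHu_zero (q s A : ℝ) (N j : ℕ) : GHu q s A N (j + 1) 0 = 0 := by
  unfold GHu
  rw [show genStirling s q 0 (j + 1) = 0 from rfl]
  ring

lemma GHu_top (q s A : ℝ) (N j : ℕ) : GHu q s A N j (N + 1) = 0 := by
  unfold GHu
  rw [qBinom_of_gt (q ^ s) (by omega)]
  ring

lemma sumU (q s A : ℝ) (N j : ℕ) :
    ∑ r ∈ Finset.range (N + 1), GHu q s A N (j + 1) (r + 1)
      = ∑ r ∈ Finset.range (N + 1), GHu q s A N (j + 1) r := by
  have e1 := Finset.sum_range_succ' (GHu q s A N (j + 1)) (N + 1)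
  have e2 := Finset.sum_range_succ (GHu q s A N (j + 1)) (N + 1)
  rw [GHu_zero] at e1
  rw [GHu_top] at e2
  linarith [e1, e2]

lemma GH_succ_succ {q : ℝ} (hq : 0 < q) (hq1 : q ≠ 1) (s A : ℝ) (N j : ℕ) :
    GH q s A (N + 1) (j + 1)
      = q ^ (A + s * (N : ℝ) - (s - 1) * (j : ℝ)) * GH q s A N j
        + qBracket q (A + s * (N : ℝ) - (s - 1) * ((j : ℝ) + 1)) * GH q s A N (j + 1) := by
  rw [GH, Finset.sum_range_succ']
  have hT0 : GHt q s A (N + 1) (j + 1) 0 = 0 := by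
    unfold GHt
    rw [show genStirling s q 0 (j + 1) = 0 from rfl]
    ring
  rw [hT0, add_zero]
  rw [Finset.sum_congr rfl (fun r hr => GHt_split hq hq1 s A N j r
    (by simpa using Nat.lt_succ_iff.mp (Finset.mem_range.mp hr)))]
  rw [Finset.sum_add_distrib, Finset.sum_sub_distrib, Finset.sum_add_distrib, sumU]
  rw [GH, GH, Finset.mul_sum, Finset.mul_sum]
  ring

lemma GH_zero_right (q s A : ℝ) (N : ℕ) :
    GH q s A N 0 = ∏ i ∈ Finset.range N, qBracket q (A + s * (i : ℝ)) := by
  rw [GH, Finset.sum_eq_single 0]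
  · unfold GHt
    rw [show genStirling s q 0 0 = 1 from rfl, qBinom_zero_right]
    rw [show (((0:ℕ)) : ℝ) * A = 0 by push_cast; ring, Real.rpow_zero, Nat.sub_zero]
    ring
  · intro r _ hr0
    obtain ⟨r', rfl⟩ : ∃ r', r = r' + 1 := ⟨r - 1, by omega⟩
    unfold GHt
    rw [show genStirling s q (r' + 1) 0 = 0 from rfl]
    ring
  · intro h
    exact absurd (Finset.mem_range.mpr (by omega)) h

lemma GH_succ_zero {q : ℝ} (s A : ℝ) (N : ℕ) :
    GH q s A (N + 1) 0 = qBracket q (A + s * (N : ℝ)) * GH q s A N 0 := by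
  rw [GH_zero_right, GH_zero_right, Finset.prod_range_succ]
  ring

lemma GH_zero_left (q s A : ℝ) (j : ℕ) : GH q s A 0 j = genStirling s q 0 j := by
  rw [GH, Finset.sum_range_one]
  unfold GHt
  rw [qBinom_zero_right, show (((0:ℕ)) : ℝ) * A = 0 by push_cast; ring, Real.rpow_zero]
  simp

lemma main_conv {q : ℝ} (hq : 0 < q) (hq1 : q ≠ 1) (s : ℝ) (m : ℕ) :
    ∀ n j, genStirling s q (n + 1) (m + j + 1)
      = ∑ k ∈ Finset.Icc m n,
          genStirling s q k m * q ^ (s * (k : ℝ) - (s - 1) * (m : ℝ)) *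
            GH q s (((k : ℝ) - (m : ℝ)) * (s - 1) + (k : ℝ) + 1) (n - k) j := by
  intro n
  induction n with
  | zero =>
    intro j
    match m with
    | 0 =>
      rw [show Finset.Icc 0 0 = {0} from rfl, Finset.sum_singleton]
      rw [show (0:ℕ) - 0 = 0 from rfl, GH_zero_left]
      simp only [Nat.zero_add]
      rw [genStirling_succ_succ s q 0 j]
      match j with
      | 0 =>
        rw [show genStirling s q 0 0 = 1 from rfl, show genStirling s q 0 1 = 0 from rfl]
        norm_num
      | j' + 1 =>
        rw [show genStirling s q 0 (j' + 1) = 0 from rfl,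
          show genStirling s q 0 (j' + 2) = 0 from rfl]
        ring
    | m' + 1 =>
      rw [Finset.Icc_eq_empty (by omega), Finset.sum_empty]
      exact genStirling_of_lt s q (by omega)
  | succ n ih =>
    intro j
    by_cases hm : m ≤ n + 1
    · rw [Finset.sum_Icc_succ_top hm]
      rw [show n + 1 - (n + 1) = 0 from by omega, GH_zero_left]
      cases j with
      | zero =>
        have hcong : ∀ k ∈ Finset.Icc m n,
            genStirling s q k m * q ^ (s * (k : ℝ) - (s - 1) * (m : ℝ)) *
              GH q s (((k : ℝ) - (m : ℝ)) * (s - 1) + (k : ℝ) + 1) (n + 1 - k) 0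
            = qBracket q (s * ((n : ℝ) + 1) - (s - 1) * ((m : ℝ) + 1)) *
              (genStirling s q k m * q ^ (s * (k : ℝ) - (s - 1) * (m : ℝ)) *
                GH q s (((k : ℝ) - (m : ℝ)) * (s - 1) + (k : ℝ) + 1) (n - k) 0) := by
          intro k hk
          have hkn : k ≤ n := (Finset.mem_Icc.mp hk).2
          rw [show n + 1 - k = (n - k) + 1 by omega, GH_succ_zero,
            show ((k : ℝ) - (m : ℝ)) * (s - 1) + (k : ℝ) + 1 + s * (((n - k : ℕ)) : ℝ)
              = s * ((n : ℝ) + 1) - (s - 1) * ((m : ℝ) + 1) from by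
                rw [Nat.cast_sub hkn]; ring]
          ring
        rw [Finset.sum_congr rfl hcong, ← Finset.mul_sum, ← ih 0]
        have hrec := genStirling_succ_succ s q (n + 1) m
        rw [show genStirling s q 0 0 = 1 from rfl]
        push_cast at hrec ⊢
        rw [hrec]
        ring
      | succ j' =>
        have hcong : ∀ k ∈ Finset.Icc m n,
            genStirling s q k m * q ^ (s * (k : ℝ) - (s - 1) * (m : ℝ)) *
              GH q s (((k : ℝ) - (m : ℝ)) * (s - 1) + (k : ℝ) + 1) (n + 1 - k) (j' + 1)
            = q ^ (s * ((n : ℝ) + 1) - (s - 1) * ((m : ℝ) + (j' : ℝ) + 1)) *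
                (genStirling s q k m * q ^ (s * (k : ℝ) - (s - 1) * (m : ℝ)) *
                  GH q s (((k : ℝ) - (m : ℝ)) * (s - 1) + (k : ℝ) + 1) (n - k) j')
              + qBracket q (s * ((n : ℝ) + 1) - (s - 1) * ((m : ℝ) + (j' : ℝ) + 2)) *
                (genStirling s q k m * q ^ (s * (k : ℝ) - (s - 1) * (m : ℝ)) *
                  GH q s (((k : ℝ) - (m : ℝ)) * (s - 1) + (k : ℝ) + 1) (n - k) (j' + 1)) := by
          intro k hk
          have hkn : k ≤ n := (Finset.mem_Icc.mp hk).2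
          rw [show n + 1 - k = (n - k) + 1 by omega, GH_succ_succ hq hq1,
            show ((k : ℝ) - (m : ℝ)) * (s - 1) + (k : ℝ) + 1 + s * (((n - k : ℕ)) : ℝ)
                - (s - 1) * ((j' : ℕ) : ℝ)
              = s * ((n : ℝ) + 1) - (s - 1) * ((m : ℝ) + (j' : ℝ) + 1) from by
                rw [Nat.cast_sub hkn]; ring,
            show ((k : ℝ) - (m : ℝ)) * (s - 1) + (k : ℝ) + 1 + s * (((n - k : ℕ)) : ℝ)
                - (s - 1) * (((j' : ℕ) : ℝ) + 1)
              = s * ((n : ℝ) + 1) - (s - 1) * ((m : ℝ) + (j' : ℝ) + 2) from by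
                rw [Nat.cast_sub hkn]; ring]
          ring
        rw [Finset.sum_congr rfl hcong, Finset.sum_add_distrib, ← Finset.mul_sum,
          ← Finset.mul_sum, ← ih j', ← ih (j' + 1)]
        rw [show genStirling s q 0 (j' + 1) = 0 from rfl]
        have hrec := genStirling_succ_succ s q (n + 1) (m + j' + 1)
        show genStirling s q (n + 1 + 1) (m + j' + 1 + 1) = _
        push_cast at hrec ⊢
        rw [hrec]
        ring
    · rw [Finset.Icc_eq_empty (by omega), Finset.sum_empty]
      exact genStirling_of_lt s q (by omega)

/-- Convolution identity for generalized `q`-Stirling numbers, first form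
(Theorem on `S_{s,q}[n+1, m+j+1]`). -/
theorem stirling_shift_convolution_first (q s : ℝ) (hq : 0 < q) (hq1 : q ≠ 1) (n m j : ℕ) :
    genStirling s q (n + 1) (m + j + 1)
    = ∑ k ∈ Finset.Icc m n, ∑ r ∈ Finset.range (n - k + 1),
        genStirling s q k m *
          q ^ ((r : ℝ) * (((k : ℝ) - (m : ℝ)) * (s - 1) + (k : ℝ) + 1)
            + (k : ℝ) + ((k : ℝ) - (m : ℝ)) * (s - 1)) *
          qBinom (q ^ s) (n - k) r * genStirling s q r j *
          ∏ i ∈ Finset.range (n - k - r),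
            qBracket q (((k : ℝ) - (m : ℝ)) * (s - 1) + (k : ℝ) + 1 + s * (i : ℝ)) := by
  rw [main_conv hq hq1 s m n j]
  apply Finset.sum_congr rfl
  intro k hk
  rw [GH, Finset.mul_sum]
  apply Finset.sum_congr rfl
  intro r hr
  unfold GHt
  rw [show (r : ℝ) * (((k : ℝ) - (m : ℝ)) * (s - 1) + (k : ℝ) + 1)
        + (k : ℝ) + ((k : ℝ) - (m : ℝ)) * (s - 1)
      = ((r : ℝ) * (((k : ℝ) - (m : ℝ)) * (s - 1) + (k : ℝ) + 1))
        + (s * (k : ℝ) - (s - 1) * (m : ℝ)) from by ring,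
    Real.rpow_add hq]
  ring
end
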